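/- Let r ≥ 1 and consider the integers R₀ = (3^r - 1)/2 · 3 (ternary representation: r ones followed by a zero) and R₂ = (3^r - 1)/2 · 3 + 2 (ternary: r ones followed by a two). Then wt(R₀) - wt(2R₀) = -r and wt(R₂) - wt(2R₂) = r, where wt is the ternary digit sum (no modular reduction needed, assuming 2R₂ < 3^n so digits are taken of the integers themselves). -/
import Mathlib


/-- `wt k` is the sum of the base-3 digits of the natural number `k`. -/
def wt (k : ℕ) : ℕ := (Nat.digits 3 k).sum

lemma wt_rec (n : ℕ) (hn : 0 < n) : wt n = n % 3 + wt (n / 3) := by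
  unfold wt
  rw [Nat.digits_def' (by norm_num) hn, List.sum_cons]

lemma pow3_odd (r : ℕ) : 3 ^ r % 2 = 1 := by
  induction r with
  | zero => simp [wt]
  | succ n ih => rw [pow_succ]; omega

lemma wt_rep (r : ℕ) : wt ((3 ^ r - 1) / 2) = r := by
  induction r with
  | zero => simp [wt]
  | succ n ih =>
    have h2 : 3 ^ n % 2 = 1 := pow3_odd n
    have h1 : 1 ≤ 3 ^ n := Nat.one_le_pow _ _ (by norm_num)
    have hp : 3 ^ (n + 1) = 3 * 3 ^ n := by ring
    have key : (3 ^ (n + 1) - 1) / 2 = 3 * ((3 ^ n - 1) / 2) + 1 := by omega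
    rw [key, wt_rec _ (by omega)]
    have : (3 * ((3 ^ n - 1) / 2) + 1) % 3 = 1 := by omega
    have hd : (3 * ((3 ^ n - 1) / 2) + 1) / 3 = (3 ^ n - 1) / 2 := by omega
    rw [this, hd, ih]; omega

lemma wt_all_twos (r : ℕ) : wt (3 ^ r - 1) = 2 * r := by
  induction r with
  | zero => simp [wt]
  | succ n ih =>
    have h1 : 1 ≤ 3 ^ n := Nat.one_le_pow _ _ (by norm_num)
    have hp : 3 ^ (n + 1) = 3 * 3 ^ n := by ring
    have key : 3 ^ (n + 1) - 1 = 3 * (3 ^ n - 1) + 2 := by omega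
    rw [key, wt_rec _ (by omega)]
    have hm : (3 * (3 ^ n - 1) + 2) % 3 = 2 := by omega
    have hd : (3 * (3 ^ n - 1) + 2) / 3 = 3 ^ n - 1 := by omega
    rw [hm, hd, ih]; ring

lemma wt_pow (r : ℕ) : wt (3 ^ r) = 1 := by
  induction r with
  | zero => simp [wt]
  | succ n ih =>
    have h1 : 1 ≤ 3 ^ n := Nat.one_le_pow _ _ (by norm_num)
    have hp : 3 ^ (n + 1) = 3 * 3 ^ n := by ring
    rw [hp, wt_rec _ (by omega)]
    have hm : (3 * 3 ^ n) % 3 = 0 := by omega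
    have hd : (3 * 3 ^ n) / 3 = 3 ^ n := by omega
    rw [hm, hd, ih]

lemma wt_pow_add_one (r : ℕ) (hr : 1 ≤ r) : wt (3 ^ r + 1) = 2 := by
  obtain ⟨k, rfl⟩ := Nat.exists_eq_add_of_le hr
  have h1 : 1 ≤ 3 ^ k := Nat.one_le_pow _ _ (by norm_num)
  have hp : 3 ^ (1 + k) = 3 * 3 ^ k := by rw [pow_add]; ring
  rw [wt_rec _ (by positivity)]
  have hm : (3 ^ (1 + k) + 1) % 3 = 1 := by omega
  have hd : (3 ^ (1 + k) + 1) / 3 = 3 ^ k := by omega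
  rw [hm, hd, wt_pow]

theorem stmt_15 (r : ℕ) (hr : 1 ≤ r) :
    (wt (3 * ((3 ^ r - 1) / 2)) : ℤ) - wt (2 * (3 * ((3 ^ r - 1) / 2))) = -(r : ℤ) ∧
    (wt (3 * ((3 ^ r - 1) / 2) + 2) : ℤ) - wt (2 * (3 * ((3 ^ r - 1) / 2) + 2)) = r := by
  have h2 : 3 ^ r % 2 = 1 := pow3_odd r
  have h1 : 3 ≤ 3 ^ r := by
    calc 3 = 3 ^ 1 := rfl
    _ ≤ 3 ^ r := Nat.pow_le_pow_right (by norm_num) hr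
  set m := (3 ^ r - 1) / 2 with hm
  have hm2 : 2 * m + 1 = 3 ^ r := by omega
  have hmpos : 0 < m := by omega
  -- wt (3 * m) = wt m = r
  have w1 : wt (3 * m) = r := by
    rw [wt_rec _ (by omega)]
    have e1 : (3 * m) % 3 = 0 := by omega
    have e2 : (3 * m) / 3 = m := by omega
    rw [e1, e2, hm, wt_rep]; omega
  -- wt (2 * (3 * m)) = wt (3 ^ (r+1) - 3)
  have w2 : wt (2 * (3 * m)) = 2 * r := by
    rw [wt_rec _ (by omega)]
    have e1 : (2 * (3 * m)) % 3 = 0 := by omega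
    have e2 : (2 * (3 * m)) / 3 = 3 ^ r - 1 := by omega
    rw [e1, e2, wt_all_twos]; omega
  have w3 : wt (3 * m + 2) = r + 2 := by
    rw [wt_rec _ (by omega)]
    have e1 : (3 * m + 2) % 3 = 2 := by omega
    have e2 : (3 * m + 2) / 3 = m := by omega
    rw [e1, e2, hm, wt_rep]; ring
  have w4 : wt (2 * (3 * m + 2)) = 2 := by
    have key : 2 * (3 * m + 2) = 3 ^ (r + 1) + 1 := by
      have : 3 ^ (r + 1) = 3 * 3 ^ r := by ring
      omega
    rw [key, wt_pow_add_one _ (by omega)]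
  rw [w1, w2, w3, w4]
  constructor <;> push_cast <;> ring
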